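/- arXiv:1302.2638 — 2 statements merged into one kernel-verified Lean document; each statement's English description precedes it below -/
import Mathlib

section
/- Let n be a positive integer and let G be a 2n×2n random real matrix drawn from the real Ginibre ensemble. Then for every complex number z, E[det(z·I − G)·Tr(G)] = −2n·z^{2n−1}. Consequently the odd-degree skew orthogonal polynomial Q_{2n+1}(z) := z·E[det(z·I − G)] + E[det(z·I − G)·Tr(G)] equals z^{2n+1} − 2n·z^{2n−1}. -/
open MeasureTheory ProbabilityTheory Matrix

/-- The real Ginibre ensemble of size `N`: the probability measure on `N × N` real
matrices (viewed as functions `Fin N → Fin N → ℝ`) whose entries are independent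
standard real Gaussians `N(0,1)`. -/
noncomputable def ginibreReal (N : ℕ) : Measure (Fin N → Fin N → ℝ) :=
  Measure.pi fun _ => Measure.pi fun _ => gaussianReal 0 1

open Real Filter
open scoped ENNReal NNReal


lemma integrable_sq_exp : Integrable (fun x : ℝ => x ^ 2 * Real.exp (-(1/2) * x ^ 2)) := by
  have := integrable_rpow_mul_exp_neg_mul_sq (b := 1/2) (by norm_num) (s := 2) (by norm_num)
  simpa using this

lemma tendsto_exp_half : Tendsto (fun x : ℝ => Real.exp (-(1/2) * x)) atTop (nhds 0) := by
  apply Real.tendsto_exp_atBot.comp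
  exact Tendsto.const_mul_atTop_of_neg (by norm_num) tendsto_id

lemma integral_sq_exp : ∫ x : ℝ, x ^ 2 * Real.exp (-(1/2) * x ^ 2) = Real.sqrt (2 * π) := by
  set f : ℝ → ℝ := fun x => -x * Real.exp (-(1/2) * x ^ 2) with hf
  set f' : ℝ → ℝ := fun x => x ^ 2 * Real.exp (-(1/2) * x ^ 2) - Real.exp (-(1/2) * x ^ 2) with hf'
  have hderiv : ∀ x : ℝ, HasDerivAt f (f' x) x := by
    intro x
    have h1 : HasDerivAt (fun x : ℝ => -(1/2) * x ^ 2) (-(1/2) * (2 * x)) x := by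
      simpa using ((hasDerivAt_pow 2 x).const_mul (-(1/2 : ℝ)))
    have h2 : HasDerivAt (fun x : ℝ => Real.exp (-(1/2) * x ^ 2))
        (Real.exp (-(1/2) * x ^ 2) * (-(1/2) * (2 * x))) x := h1.exp
    have h3 : HasDerivAt (fun y : ℝ => -y * Real.exp (-(1/2) * y ^ 2))
        (-1 * Real.exp (-(1/2) * x ^ 2) + -x * (Real.exp (-(1/2) * x ^ 2) * (-(1/2) * (2 * x)))) x :=
      (hasDerivAt_neg x).mul h2
    convert h3 using 1
    ring
  have hinte : Integrable (fun x : ℝ => Real.exp (-(1/2) * x ^ 2)) :=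
    integrable_exp_neg_mul_sq (by norm_num : (0:ℝ) < 1/2)
  have hint : Integrable f' := integrable_sq_exp.sub hinte
  have htop : Tendsto f atTop (nhds 0) := by
    have ho : (fun x : ℝ => -x * Real.exp (-(1/2) * x ^ 2)) =o[atTop]
        fun x => Real.exp (-(1/2) * x) := by
      have := (rpow_mul_exp_neg_mul_sq_isLittleO_exp_neg (b := 1/2) (by norm_num) 1).neg_left
      refine this.congr' ?_ (by rfl)
      filter_upwards [eventually_ge_atTop (0:ℝ)] with x hx
      rw [Real.rpow_one]; ring
    exact ho.trans_tendsto tendsto_exp_half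
  have hbot : Tendsto f atBot (nhds 0) := by
    have h1 : Tendsto (fun x : ℝ => f (-x)) atTop (nhds 0) := by
      have he : (fun x : ℝ => f (-x)) = fun x : ℝ => x * Real.exp (-(1/2) * x ^ 2) := by
        funext x; simp only [hf]; ring_nf
      rw [he]
      have ho : (fun x : ℝ => x * Real.exp (-(1/2) * x ^ 2)) =o[atTop]
          fun x => Real.exp (-(1/2) * x) := by
        have := rpow_mul_exp_neg_mul_sq_isLittleO_exp_neg (b := 1/2) (by norm_num) 1
        refine this.congr' ?_ (by rfl)
        filter_upwards [eventually_ge_atTop (0:ℝ)] with x hx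
        rw [Real.rpow_one]
      exact ho.trans_tendsto tendsto_exp_half
    have h2 := h1.comp tendsto_neg_atBot_atTop
    exact h2.congr (fun x => by simp [Function.comp])
  have hIoi : ∫ x in Set.Ioi (0:ℝ), f' x = 0 - f 0 :=
    integral_Ioi_of_hasDerivAt_of_tendsto' (fun x _ => hderiv x) hint.integrableOn htop
  have hIic : ∫ x in Set.Iic (0:ℝ), f' x = f 0 - 0 :=
    integral_Iic_of_hasDerivAt_of_tendsto' (fun x _ => hderiv x) hint.integrableOn hbot
  have hsplit : ∫ x : ℝ, f' x = 0 := by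
    rw [← intervalIntegral.integral_Iic_add_Ioi (b := (0:ℝ)) hint.integrableOn hint.integrableOn,
      hIoi, hIic]
    simp [hf]
  have hgauss : ∫ x : ℝ, Real.exp (-(1/2) * x ^ 2) = Real.sqrt (2 * π) := by
    rw [integral_gaussian, show π / (1/2 : ℝ) = 2 * π by ring]
  rw [hf', ] at hsplit
  rw [integral_sub integrable_sq_exp hinte, sub_eq_zero] at hsplit
  rw [hsplit, hgauss]

noncomputable abbrev γ : Measure ℝ := gaussianReal 0 1

lemma gauss_density : γ = (volume : Measure ℝ).withDensity
    (fun x => ((gaussianPDFReal 0 1 x).toNNReal : ℝ≥0∞)) := by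
  rw [show γ = gaussianReal 0 1 from rfl, gaussianReal_of_var_ne_zero 0 one_ne_zero]
  rfl

lemma pdf_eq (x : ℝ) : gaussianPDFReal 0 1 x = (Real.sqrt (2 * π))⁻¹ * Real.exp (-(1/2) * x ^ 2) := by
  simp only [gaussianPDFReal, NNReal.coe_one, mul_one, sub_zero]
  rw [show -x ^ 2 / 2 = -(1/2) * (x:ℝ) ^ 2 by ring]

lemma gauss_integral_eq {E : Type*} [NormedAddCommGroup E] [NormedSpace ℝ E] (g : ℝ → E) :
    ∫ x, g x ∂γ = ∫ x : ℝ, (gaussianPDFReal 0 1 x : ℝ) • g x := by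
  rw [gauss_density, integral_withDensity_eq_integral_smul
    ((measurable_gaussianPDFReal 0 1).real_toNNReal) g]
  congr 1
  funext x
  rw [NNReal.smul_def, Real.coe_toNNReal _ (gaussianPDFReal_nonneg 0 1 x)]

lemma gauss_map_neg : γ.map (fun x : ℝ => (-1 : ℝ) * x) = γ := by
  have h := gaussianReal_map_const_mul (μ := 0) (v := 1) (-1 : ℝ)
  have h2 : (⟨(-1:ℝ)^2, sq_nonneg _⟩ : ℝ≥0) * 1 = 1 := by
    ext; norm_num
  rw [show (NNReal.mk ((-1:ℝ)^2) (sq_nonneg _) * 1) = 1 from h2, mul_zero] at h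
  exact h

lemma gm1R : ∫ x, x ∂γ = 0 := by
  have h1 : ∫ x, x ∂γ = ∫ x, (-1 : ℝ) * x ∂γ := by
    conv_lhs => rw [← gauss_map_neg]
    rw [integral_map (f := fun x : ℝ => x) (by fun_prop) measurable_id.aestronglyMeasurable]
  simp only [neg_one_mul] at h1
  rw [integral_neg] at h1
  linarith

lemma gm2R : ∫ x, x ^ 2 ∂γ = 1 := by
  rw [gauss_integral_eq (fun x : ℝ => x ^ 2)]
  have : ∀ x : ℝ, (gaussianPDFReal 0 1 x : ℝ) • (x ^ 2)
      = (Real.sqrt (2 * π))⁻¹ * (x ^ 2 * Real.exp (-(1/2) * x ^ 2)) := by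
    intro x
    rw [pdf_eq, smul_eq_mul]; ring
  simp_rw [this]
  rw [integral_const_mul, integral_sq_exp]
  rw [inv_mul_cancel₀]
  positivity

lemma gintR1 : Integrable (fun x : ℝ => x) γ := by
  rw [gauss_density, integrable_withDensity_iff_integrable_smul
    ((measurable_gaussianPDFReal 0 1).real_toNNReal)]
  have : ∀ x : ℝ, ((gaussianPDFReal 0 1 x).toNNReal : ℝ≥0) • x
      = (Real.sqrt (2 * π))⁻¹ * (x * Real.exp (-(1/2) * x ^ 2)) := by
    intro x
    rw [NNReal.smul_def, Real.coe_toNNReal _ (gaussianPDFReal_nonneg 0 1 x), pdf_eq,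
      smul_eq_mul]
    ring
  simp_rw [this]
  exact (integrable_mul_exp_neg_mul_sq (by norm_num : (0:ℝ) < 1/2)).const_mul _

lemma gintR2 : Integrable (fun x : ℝ => x ^ 2) γ := by
  rw [gauss_density, integrable_withDensity_iff_integrable_smul
    ((measurable_gaussianPDFReal 0 1).real_toNNReal)]
  have : ∀ x : ℝ, ((gaussianPDFReal 0 1 x).toNNReal : ℝ≥0) • (x ^ 2)
      = (Real.sqrt (2 * π))⁻¹ * (x ^ 2 * Real.exp (-(1/2) * x ^ 2)) := by
    intro x
    rw [NNReal.smul_def, Real.coe_toNNReal _ (gaussianPDFReal_nonneg 0 1 x), pdf_eq,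
      smul_eq_mul]
    ring
  simp_rw [this]
  exact integrable_sq_exp.const_mul _

lemma gm1C : ∫ x, (x : ℂ) ∂γ = 0 := by
  rw [show (∫ x, (x : ℂ) ∂γ) = ((∫ x, x ∂γ : ℝ) : ℂ) from integral_ofReal, gm1R]
  simp

lemma gm2C : ∫ x, (x : ℂ) ^ 2 ∂γ = 1 := by
  have : ∀ x : ℝ, (x : ℂ) ^ 2 = ((x ^ 2 : ℝ) : ℂ) := by intro x; push_cast; ring
  simp_rw [this]
  rw [show (∫ x, ((x ^ 2 : ℝ) : ℂ) ∂γ) = ((∫ x, x ^ 2 ∂γ : ℝ) : ℂ) from integral_ofReal, gm2R]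
  simp

lemma gintC1 : Integrable (fun x : ℝ => (x : ℂ)) γ := gintR1.ofReal

lemma gintC2 : Integrable (fun x : ℝ => (x : ℂ) ^ 2) γ := by
  have : ∀ x : ℝ, (x : ℂ) ^ 2 = ((x ^ 2 : ℝ) : ℂ) := by intro x; push_cast; ring
  simp_rw [this]
  exact gintR2.ofReal

lemma gintPoly (a b c : ℂ) : Integrable (fun x : ℝ => a + b * (x : ℂ) + c * (x : ℂ) ^ 2) γ :=
  ((integrable_const a).add (gintC1.const_mul b)).add (gintC2.const_mul c)

lemma gmPoly (a b c : ℂ) : ∫ x, (a + b * (x : ℂ) + c * (x : ℂ) ^ 2) ∂γ = a + c := by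
  have h1 : Integrable (fun x : ℝ => a + b * (x : ℂ)) γ :=
    (integrable_const a).add (gintC1.const_mul b)
  have e1 : (∫ x, (a + b * (x : ℂ) + c * (x : ℂ) ^ 2) ∂γ)
      = (∫ x, (a + b * (x : ℂ)) ∂γ) + ∫ x, c * (x : ℂ) ^ 2 ∂γ :=
    integral_add h1 (gintC2.const_mul c)
  have e2 : (∫ x, (a + b * (x : ℂ)) ∂γ) = (∫ _x : ℝ, a ∂γ) + ∫ x, b * (x : ℂ) ∂γ :=
    integral_add (integrable_const a) (gintC1.const_mul b)
  rw [e1, e2, integral_const, integral_const_mul, integral_const_mul, gm1C, gm2C]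
  simp

lemma gm_mul (p q r s : ℂ) : ∫ x, ((p + q * (x : ℂ)) * (r + s * (x : ℂ))) ∂γ = p * r + q * s := by
  have h : ∀ x : ℝ, (p + q * (x : ℂ)) * (r + s * (x : ℂ))
      = (p * r) + (p * s + q * r) * (x : ℂ) + (q * s) * (x : ℂ) ^ 2 := by
    intro x; ring
  simp_rw [h]
  rw [gmPoly]

lemma gint_mul (p q r s : ℂ) :
    Integrable (fun x : ℝ => (p + q * (x : ℂ)) * (r + s * (x : ℂ))) γ := by
  have h : ∀ x : ℝ, (p + q * (x : ℂ)) * (r + s * (x : ℂ))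
      = (p * r) + (p * s + q * r) * (x : ℂ) + (q * s) * (x : ℂ) ^ 2 := by
    intro x; ring
  simp_rw [h]
  exact gintPoly _ _ _

section PiLemmas

lemma pi_integral {ι : Type*} [Fintype ι] {E : ι → Type*} [∀ i, MeasurableSpace (E i)]
    (μ : ∀ i, Measure (E i)) [∀ i, SigmaFinite (μ i)] (f : ∀ i, E i → ℂ) :
    ∫ x, ∏ i, f i (x i) ∂(Measure.pi μ) = ∏ i, ∫ x, f i x ∂(μ i) := by
  letI : ∀ i, MeasureSpace (E i) := fun i => ⟨μ i⟩
  haveI : ∀ i, SigmaFinite (volume : Measure (E i)) := fun i =>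
    inferInstanceAs (SigmaFinite (μ i))
  exact MeasureTheory.integral_fintype_prod_eq_prod f

lemma pi_integrable {ι : Type*} [Fintype ι] {E : ι → Type*} [∀ i, MeasurableSpace (E i)]
    (μ : ∀ i, Measure (E i)) [∀ i, SigmaFinite (μ i)] (f : ∀ i, E i → ℂ)
    (hf : ∀ i, Integrable (f i) (μ i)) :
    Integrable (fun x : ∀ i, E i => ∏ i, f i (x i)) (Measure.pi μ) := by
  letI : ∀ i, MeasureSpace (E i) := fun i => ⟨μ i⟩
  haveI : ∀ i, SigmaFinite (volume : Measure (E i)) := fun i =>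
    inferInstanceAs (SigmaFinite (μ i))
  exact MeasureTheory.Integrable.fintype_prod_dep hf

end PiLemmas

section Main

open Equiv

variable {N : ℕ}

noncomputable def ρ (N : ℕ) : Measure (Fin N → ℝ) := Measure.pi fun _ => γ

instance : IsProbabilityMeasure (ρ N) := by unfold ρ; infer_instance

/-- Per-row integrand: determinant entry times optional trace factor. -/
noncomputable def rowF (z : ℂ) (σ : Equiv.Perm (Fin N)) (k i : Fin N) (v : Fin N → ℝ) : ℂ :=
  ((if i = σ i then z else 0) - (v (σ i) : ℂ)) * (if i = k then (v k : ℂ) else 1)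

/-- Per-entry factor of the per-row integrand. -/
noncomputable def GF (z : ℂ) (σ : Equiv.Perm (Fin N)) (k i j : Fin N) : ℝ → ℂ := fun x =>
  ((if j = σ i then (if i = σ i then z else 0) else 1) + (if j = σ i then (-1 : ℂ) else 0) * x)
  * ((if i = k ∧ j = k then 0 else 1) + (if i = k ∧ j = k then (1 : ℂ) else 0) * x)

lemma rowF_eq_prod (z : ℂ) (σ : Equiv.Perm (Fin N)) (k i : Fin N) (v : Fin N → ℝ) :
    rowF z σ k i v = ∏ j, GF z σ k i j (v j) := by
  unfold rowF GF
  rw [Finset.prod_mul_distrib]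
  congr 1
  · have h : ∀ j : Fin N,
        ((if j = σ i then (if i = σ i then z else 0) else 1)
          + (if j = σ i then (-1 : ℂ) else 0) * (v j : ℂ))
        = (if j = σ i then ((if i = σ i then z else 0) - (v j : ℂ)) else 1) := by
      intro j; split_ifs <;> ring
    simp_rw [h]
    rw [Finset.prod_ite_eq' Finset.univ (σ i)
      (fun j => ((if i = σ i then z else 0) - (v j : ℂ)))]
    simp
  · by_cases hik : i = k
    · subst hik
      have h : ∀ j : Fin N,
          ((if i = i ∧ j = i then (0:ℂ) else 1) + (if i = i ∧ j = i then (1 : ℂ) else 0) * (v j : ℂ))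
          = (if j = i then ((v j : ℂ)) else 1) := by
        intro j; by_cases hji : j = i <;> simp [hji]
      rw [Finset.prod_congr rfl (fun j _ => h j)]
      rw [Finset.prod_ite_eq' Finset.univ i (fun j => ((v j : ℂ)))]
      simp
    · have h : ∀ j : Fin N,
          ((if i = k ∧ j = k then (0:ℂ) else 1) + (if i = k ∧ j = k then (1 : ℂ) else 0) * (v j : ℂ))
          = 1 := by
        intro j; simp [hik]
      simp_rw [h]
      simp [hik]

lemma GF_integrable (z : ℂ) (σ : Equiv.Perm (Fin N)) (k i j : Fin N) :
    Integrable (GF z σ k i j) γ := gint_mul _ _ _ _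

lemma GF_integral (z : ℂ) (σ : Equiv.Perm (Fin N)) (k i j : Fin N) :
    ∫ x, GF z σ k i j x ∂γ
      = (if j = σ i then (if i = σ i then z else 0) else 1) * (if i = k ∧ j = k then 0 else 1)
        + (if j = σ i then (-1 : ℂ) else 0) * (if i = k ∧ j = k then 1 else 0) :=
  gm_mul _ _ _ _

lemma rowF_integrable (z : ℂ) (σ : Equiv.Perm (Fin N)) (k i : Fin N) :
    Integrable (rowF z σ k i) (ρ N) := by
  have : rowF z σ k i = fun v => ∏ j, GF z σ k i j (v j) := funext (rowF_eq_prod z σ k i)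
  rw [this]
  exact pi_integrable _ _ (fun j => GF_integrable z σ k i j)

lemma rowF_integral (z : ℂ) (σ : Equiv.Perm (Fin N)) (k i : Fin N) :
    ∫ v, rowF z σ k i v ∂(ρ N)
      = if i = k then (if i = σ i then -1 else 0) else (if i = σ i then z else 0) := by
  simp_rw [rowF_eq_prod z σ k i]
  rw [show (ρ N) = Measure.pi (fun _ : Fin N => γ) from rfl,
    pi_integral (fun _ : Fin N => γ) (fun j => GF z σ k i j)]
  simp_rw [GF_integral z σ k i]
  by_cases hik : i = k
  · subst hik
    by_cases hfix : i = σ i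
    · have hsig : σ i = i := hfix.symm
      have h : ∀ j : Fin N,
          ((if j = σ i then (if i = σ i then z else 0) else 1) * (if i = i ∧ j = i then 0 else 1)
            + (if j = σ i then (-1 : ℂ) else 0) * (if i = i ∧ j = i then 1 else 0))
          = (if j = i then (-1 : ℂ) else 1) := by
        intro j
        by_cases hji : j = i <;> simp [hji, hsig, hfix.symm] <;> simp [← hfix]
      rw [Finset.prod_congr rfl (fun j _ => h j)]
      rw [Finset.prod_ite_eq' Finset.univ i (fun _ => (-1 : ℂ))]
      simp [hfix.symm]
    · rw [Finset.prod_eq_zero (Finset.mem_univ (σ i))]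
      · simp [hfix]
      · have hne : ¬ (σ i = i) := fun h => hfix h.symm
        simp [hfix, hne]
  · have h : ∀ j : Fin N,
        ((if j = σ i then (if i = σ i then z else 0) else 1) * (if i = k ∧ j = k then 0 else 1)
          + (if j = σ i then (-1 : ℂ) else 0) * (if i = k ∧ j = k then 1 else 0))
        = (if j = σ i then (if i = σ i then z else 0) else 1) := by
      intro j; simp [hik]
    simp_rw [h]
    rw [Finset.prod_ite_eq' Finset.univ (σ i) (fun _ => (if i = σ i then z else 0))]
    simp [hik]

end Main

section Main2x
variable {N : ℕ}

/-- Row function for the plain determinant (no trace factor). -/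
noncomputable def rowD (z : ℂ) (σ : Equiv.Perm (Fin N)) (i : Fin N) (v : Fin N → ℝ) : ℂ :=
  (if i = σ i then z else 0) - (v (σ i) : ℂ)

noncomputable def GD (z : ℂ) (σ : Equiv.Perm (Fin N)) (i j : Fin N) : ℝ → ℂ := fun x =>
  ((if j = σ i then (if i = σ i then z else 0) else 1) + (if j = σ i then (-1 : ℂ) else 0) * x)
  * (1 + 0 * x)

lemma rowD_eq_prod (z : ℂ) (σ : Equiv.Perm (Fin N)) (i : Fin N) (v : Fin N → ℝ) :
    rowD z σ i v = ∏ j, GD z σ i j (v j) := by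
  unfold rowD GD
  have h : ∀ j : Fin N,
      (((if j = σ i then (if i = σ i then z else 0) else 1)
        + (if j = σ i then (-1 : ℂ) else 0) * (v j : ℂ)) * (1 + 0 * (v j : ℂ)))
      = (if j = σ i then ((if i = σ i then z else 0) - (v j : ℂ)) else 1) := by
    intro j; split_ifs <;> ring
  rw [Finset.prod_congr rfl (fun j _ => h j),
    Finset.prod_ite_eq' Finset.univ (σ i) (fun j => ((if i = σ i then z else 0) - (v j : ℂ)))]
  simp

lemma rowD_integrable (z : ℂ) (σ : Equiv.Perm (Fin N)) (i : Fin N) :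
    Integrable (rowD z σ i) (ρ N) := by
  have : rowD z σ i = fun v => ∏ j, GD z σ i j (v j) := funext (rowD_eq_prod z σ i)
  rw [this]
  exact pi_integrable _ _ (fun j => gint_mul _ _ _ _)

lemma rowD_integral (z : ℂ) (σ : Equiv.Perm (Fin N)) (i : Fin N) :
    ∫ v, rowD z σ i v ∂(ρ N) = if i = σ i then z else 0 := by
  simp_rw [rowD_eq_prod z σ i]
  rw [show (ρ N) = Measure.pi (fun _ : Fin N => γ) from rfl,
    pi_integral (fun _ : Fin N => γ) (fun j => GD z σ i j)]
  have h : ∀ j : Fin N, ∫ x, GD z σ i j x ∂γ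
      = (if j = σ i then (if i = σ i then z else 0) else 1) := by
    intro j
    rw [show ∫ x, GD z σ i j x ∂γ
      = (if j = σ i then (if i = σ i then z else 0) else 1) * 1
        + (if j = σ i then (-1 : ℂ) else 0) * 0 from gm_mul _ _ _ _]
    ring
  rw [Finset.prod_congr rfl (fun j _ => h j),
    Finset.prod_ite_eq' Finset.univ (σ i) (fun _ => (if i = σ i then z else 0))]
  simp

end Main2x
section Main2y
variable {N : ℕ}

lemma ginibre_eq_pi (N : ℕ) : ginibreReal N = Measure.pi (fun _ : Fin N => ρ N) := rfl

lemma term_integralD (z : ℂ) (σ : Equiv.Perm (Fin N)) :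
    ∫ g, ∏ i, rowD z σ i (g i) ∂(ginibreReal N) = ∏ i, (if i = σ i then z else 0) := by
  rw [ginibre_eq_pi, pi_integral (fun _ : Fin N => ρ N) (fun i => rowD z σ i)]
  exact Finset.prod_congr rfl (fun i _ => rowD_integral z σ i)

lemma term_integralF (z : ℂ) (σ : Equiv.Perm (Fin N)) (k : Fin N) :
    ∫ g, ∏ i, rowF z σ k i (g i) ∂(ginibreReal N)
      = ∏ i, (if i = k then (if i = σ i then -1 else 0) else (if i = σ i then z else 0)) := by
  rw [ginibre_eq_pi, pi_integral (fun _ : Fin N => ρ N) (fun i => rowF z σ k i)]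
  exact Finset.prod_congr rfl (fun i _ => rowF_integral z σ k i)

lemma sum_permD (z : ℂ) :
    ∑ σ : Equiv.Perm (Fin N), ((Equiv.Perm.sign σ : ℤ) : ℂ) * ∏ i, (if i = σ i then z else 0)
      = z ^ N := by
  rw [Finset.sum_eq_single_of_mem (1 : Equiv.Perm (Fin N)) (Finset.mem_univ _)]
  · simp [Finset.card_univ]
  · intro σ _ hσ
    have : ∃ i, σ i ≠ i := by
      by_contra h
      push_neg at h
      exact hσ (Equiv.ext h)
    obtain ⟨i₀, hi₀⟩ := this
    rw [Finset.prod_eq_zero (Finset.mem_univ i₀) (show (if i₀ = σ i₀ then z else 0) = 0 from if_neg (fun h => hi₀ h.symm)), mul_zero]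

lemma sum_permF (z : ℂ) (k : Fin N) :
    ∑ σ : Equiv.Perm (Fin N), ((Equiv.Perm.sign σ : ℤ) : ℂ)
        * ∏ i, (if i = k then (if i = σ i then -1 else 0) else (if i = σ i then z else 0))
      = -z ^ (N - 1) := by
  rw [Finset.sum_eq_single_of_mem (1 : Equiv.Perm (Fin N)) (Finset.mem_univ _)]
  · have h : ∀ i : Fin N,
        (if i = k then (if i = (1 : Equiv.Perm (Fin N)) i then (-1 : ℂ) else 0)
          else (if i = (1 : Equiv.Perm (Fin N)) i then z else 0))
        = (if i = k then (-1 : ℂ) else z) := by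
      intro i; simp
    rw [Finset.prod_congr rfl (fun i _ => h i),
      ← Finset.mul_prod_erase Finset.univ _ (Finset.mem_univ k)]
    have h2 : ∀ i ∈ Finset.univ.erase k, (if i = k then (-1 : ℂ) else z) = z := by
      intro i hi
      simp [Finset.ne_of_mem_erase hi]
    rw [Finset.prod_congr rfl h2, Finset.prod_const, Finset.card_erase_of_mem (Finset.mem_univ k),
      Finset.card_univ, Fintype.card_fin]
    simp
  · intro σ _ hσ
    have hex : ∃ i, σ i ≠ i := by
      by_contra h
      push_neg at h
      exact hσ (Equiv.ext h)
    by_cases hk : σ k = k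
    · obtain ⟨i₀, hi₀⟩ := hex
      have hi₀k : i₀ ≠ k := fun h => hi₀ (by rw [h]; exact hk)
      rw [Finset.prod_eq_zero (Finset.mem_univ i₀)
        (by rw [if_neg hi₀k, if_neg (fun h => hi₀ h.symm)]), mul_zero]
    · rw [Finset.prod_eq_zero (Finset.mem_univ k)
        (by rw [if_pos rfl, if_neg (fun h => hk h.symm)]), mul_zero]

end Main2y

section Final

variable {N : ℕ}

lemma entry_eq (z : ℂ) (g : Fin N → Fin N → ℝ) (i j : Fin N) :
    (z • (1 : Matrix (Fin N) (Fin N) ℂ) - (Matrix.of g).map ((↑) : ℝ → ℂ)) i j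
      = (if i = j then z else 0) - (g i j : ℂ) := by
  simp [Matrix.sub_apply, Matrix.smul_apply, Matrix.one_apply, Matrix.map_apply,
    smul_eq_mul, mul_ite, mul_one, mul_zero]

lemma det_expand (z : ℂ) (g : Fin N → Fin N → ℝ) :
    (z • (1 : Matrix (Fin N) (Fin N) ℂ) - (Matrix.of g).map ((↑) : ℝ → ℂ)).det
      = ∑ σ : Equiv.Perm (Fin N), ((Equiv.Perm.sign σ : ℤ) : ℂ) * ∏ i, rowD z σ i (g i) := by
  rw [← Matrix.det_transpose, Matrix.det_apply']
  refine Finset.sum_congr rfl (fun σ _ => ?_)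
  congr 1
  refine Finset.prod_congr rfl (fun i _ => ?_)
  rw [Matrix.transpose_apply, entry_eq]
  rfl

lemma trace_expand (g : Fin N → Fin N → ℝ) :
    (((Matrix.of g).trace : ℝ) : ℂ) = ∑ k, (g k k : ℂ) := by
  rw [Matrix.trace]
  push_cast
  rfl

lemma prod_rowF_eq (z : ℂ) (σ : Equiv.Perm (Fin N)) (k : Fin N) (g : Fin N → Fin N → ℝ) :
    ∏ i, rowF z σ k i (g i) = (∏ i, rowD z σ i (g i)) * (g k k : ℂ) := by
  unfold rowF rowD
  rw [Finset.prod_mul_distrib]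
  congr 1
  rw [Finset.prod_ite_eq' Finset.univ k (fun i => (g i k : ℂ))]
  simp

lemma integrand_expand (z : ℂ) (g : Fin N → Fin N → ℝ) :
    (z • (1 : Matrix (Fin N) (Fin N) ℂ) - (Matrix.of g).map ((↑) : ℝ → ℂ)).det
        * (((Matrix.of g).trace : ℝ) : ℂ)
      = ∑ σ : Equiv.Perm (Fin N), ∑ k,
          ((Equiv.Perm.sign σ : ℤ) : ℂ) * ∏ i, rowF z σ k i (g i) := by
  rw [det_expand, trace_expand, Finset.sum_mul]
  refine Finset.sum_congr rfl (fun σ _ => ?_)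
  rw [Finset.mul_sum]
  refine Finset.sum_congr rfl (fun k _ => ?_)
  rw [prod_rowF_eq]
  ring

lemma termF_integrable (z : ℂ) (σ : Equiv.Perm (Fin N)) (k : Fin N) :
    Integrable (fun g : Fin N → Fin N → ℝ => ∏ i, rowF z σ k i (g i)) (ginibreReal N) := by
  rw [ginibre_eq_pi]
  exact pi_integrable _ _ (fun i => rowF_integrable z σ k i)

lemma termD_integrable (z : ℂ) (σ : Equiv.Perm (Fin N)) :
    Integrable (fun g : Fin N → Fin N → ℝ => ∏ i, rowD z σ i (g i)) (ginibreReal N) := by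
  rw [ginibre_eq_pi]
  exact pi_integrable _ _ (fun i => rowD_integrable z σ i)

lemma det_integral (N : ℕ) (z : ℂ) :
    (∫ g, (z • (1 : Matrix (Fin N) (Fin N) ℂ)
        - (Matrix.of g).map ((↑) : ℝ → ℂ)).det ∂(ginibreReal N)) = z ^ N := by
  simp_rw [det_expand z]
  rw [integral_finset_sum _ (fun σ _ => (termD_integrable z σ).const_mul _)]
  have h : ∀ σ : Equiv.Perm (Fin N),
      (∫ g, ((Equiv.Perm.sign σ : ℤ) : ℂ) * ∏ i, rowD z σ i (g i) ∂(ginibreReal N))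
        = ((Equiv.Perm.sign σ : ℤ) : ℂ) * ∏ i, (if i = σ i then z else 0) := by
    intro σ
    rw [integral_const_mul, term_integralD]
  rw [Finset.sum_congr rfl (fun σ _ => h σ), sum_permD]

lemma detTr_integral (N : ℕ) (z : ℂ) :
    (∫ g, (z • (1 : Matrix (Fin N) (Fin N) ℂ)
        - (Matrix.of g).map ((↑) : ℝ → ℂ)).det * (((Matrix.of g).trace : ℝ) : ℂ)
      ∂(ginibreReal N)) = -(N : ℂ) * z ^ (N - 1) := by
  simp_rw [integrand_expand z]
  rw [integral_finset_sum _ (fun σ _ =>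
    integrable_finset_sum _ (fun k _ => (termF_integrable z σ k).const_mul _))]
  have h : ∀ σ : Equiv.Perm (Fin N),
      (∫ g, ∑ k, ((Equiv.Perm.sign σ : ℤ) : ℂ) * ∏ i, rowF z σ k i (g i) ∂(ginibreReal N))
        = ∑ k, ((Equiv.Perm.sign σ : ℤ) : ℂ)
            * ∏ i, (if i = k then (if i = σ i then -1 else 0)
                else (if i = σ i then z else 0)) := by
    intro σ
    rw [integral_finset_sum _ (fun k _ => (termF_integrable z σ k).const_mul _)]
    refine Finset.sum_congr rfl (fun k _ => ?_)
    rw [integral_const_mul, term_integralF]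
  rw [Finset.sum_congr rfl (fun σ _ => h σ), Finset.sum_comm]
  have h2 : ∀ k : Fin N,
      (∑ σ : Equiv.Perm (Fin N), ((Equiv.Perm.sign σ : ℤ) : ℂ)
        * ∏ i, (if i = k then (if i = σ i then -1 else 0)
            else (if i = σ i then z else 0))) = -z ^ (N - 1) := fun k => sum_permF z k
  rw [Finset.sum_congr rfl (fun k _ => h2 k), Finset.sum_const, Finset.card_univ,
    Fintype.card_fin]
  simp

end Final


/-- For the real Ginibre ensemble of size `2n`:
`E[det (z I - G) ⬝ Tr G] = -2n z^(2n-1)`, and consequently the odd-degree skew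
orthogonal polynomial `Q_{2n+1}(z) = z E[det (z I - G)] + E[det (z I - G) Tr G]`
equals `z^(2n+1) - 2n z^(2n-1)`. -/
theorem realGinibre_odd_skew_orthogonal_poly (n : ℕ) (hn : 0 < n) (z : ℂ) :
    (∫ g, (z • (1 : Matrix (Fin (2 * n)) (Fin (2 * n)) ℂ)
          - (Matrix.of g).map ((↑) : ℝ → ℂ)).det * ((Matrix.of g).trace : ℂ)
        ∂(ginibreReal (2 * n)))
      = -(2 * n : ℂ) * z ^ (2 * n - 1) ∧
    z * (∫ g, (z • (1 : Matrix (Fin (2 * n)) (Fin (2 * n)) ℂ)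
          - (Matrix.of g).map ((↑) : ℝ → ℂ)).det ∂(ginibreReal (2 * n)))
      + (∫ g, (z • (1 : Matrix (Fin (2 * n)) (Fin (2 * n)) ℂ)
          - (Matrix.of g).map ((↑) : ℝ → ℂ)).det * ((Matrix.of g).trace : ℂ)
        ∂(ginibreReal (2 * n)))
      = z ^ (2 * n + 1) - (2 * n : ℂ) * z ^ (2 * n - 1) := by
  have h1 := detTr_integral (2 * n) z
  have h2 := det_integral (2 * n) z
  have hc : ((2 * n : ℕ) : ℂ) = (2 * n : ℂ) := by push_cast; ring
  rw [hc] at h1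
  constructor
  · exact h1
  · rw [h1, h2]
    have : z * z ^ (2 * n) = z ^ (2 * n + 1) := by ring
    rw [this]
    ring
end

section
/- Let n be a positive integer and let β₁, β₂ be real parameters with β₁ ≥ 0 and β₂ ≥ 0. For G drawn from the real anti-spherical ensemble of size 2n with parameters (β₁, β₂), and for every complex number z, ⟨det(z·I − G)⟩ = z^{2n}. -/
open MeasureTheory Matrix

/-- The (unnormalized) density of the real anti-spherical ensemble of size `N` with
parameters `(β₁, β₂)`: `det(Gᵀ G)^{β₁} det(I - Gᵀ G)^{β₂}` on the set where
`I - Gᵀ G` is positive definite, and `0` elsewhere. -/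
noncomputable def antiSphericalRealWeight (N : ℕ) (β₁ β₂ : ℝ) (g : Fin N → Fin N → ℝ) : ℝ :=
  Set.indicator {g' : Fin N → Fin N → ℝ | (1 - (Matrix.of g')ᵀ * Matrix.of g').PosDef}
    (fun g' => ((Matrix.of g')ᵀ * Matrix.of g').det ^ β₁ *
      (1 - (Matrix.of g')ᵀ * Matrix.of g').det ^ β₂) g

namespace ASAux

open scoped Classical

variable {N : ℕ} {β₁ β₂ : ℝ}

/-- the set where `1 - gᵀ g` is positive definite -/
def Sset (N : ℕ) : Set (Fin N → Fin N → ℝ) :=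
  {g' | (1 - (Matrix.of g')ᵀ * Matrix.of g').PosDef}

/-- the unit entrywise box -/
def Kbox (N : ℕ) : Set (Fin N → Fin N → ℝ) := {g | ∀ i j, |g i j| ≤ 1}

lemma herm (g : Fin N → Fin N → ℝ) : (1 - (Matrix.of g)ᵀ * Matrix.of g).IsHermitian := by
  have h1 : ((Matrix.of g)ᵀ * Matrix.of g).IsHermitian := by
    have := Matrix.isHermitian_conjTranspose_mul_self (Matrix.of g)
    rwa [Matrix.conjTranspose_eq_transpose_of_trivial] at this
  exact Matrix.isHermitian_one.sub h1

lemma quad (g : Fin N → Fin N → ℝ) (x : Fin N → ℝ) :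
    x ⬝ᵥ ((1 - (Matrix.of g)ᵀ * Matrix.of g) *ᵥ x)
      = (∑ j, x j ^ 2) - ∑ i, (∑ j, g i j * x j) ^ 2 := by
  rw [Matrix.sub_mulVec, dotProduct_sub, Matrix.one_mulVec]
  congr 1
  · simp [dotProduct, pow_two]
  · rw [← Matrix.mulVec_mulVec, Matrix.dotProduct_mulVec, Matrix.vecMul_transpose]
    simp [dotProduct, Matrix.mulVec, pow_two]

lemma quad' (g : Fin N → Fin N → ℝ) (x : Fin N → ℝ) :
    star x ⬝ᵥ ((1 - (Matrix.of g)ᵀ * Matrix.of g) *ᵥ x)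
      = (∑ j, x j ^ 2) - ∑ i, (∑ j, g i j * x j) ^ 2 := by
  rw [show (star x : Fin N → ℝ) = x from funext fun i => star_trivial _, quad]

lemma mem_Sset_iff (g : Fin N → Fin N → ℝ) :
    g ∈ Sset N ↔ ∀ x : Fin N → ℝ, x ≠ 0 →
      ∑ i, (∑ j, g i j * x j) ^ 2 < ∑ j, x j ^ 2 := by
  constructor
  · intro h x hx
    have := h.dotProduct_mulVec_pos hx
    rw [quad'] at this; linarith
  · intro h
    exact .of_dotProduct_mulVec_pos (herm g) fun x hx => by rw [quad']; have := h x hx; linarith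

lemma mem_Sset_of_box (g : Fin N → Fin N → ℝ)
    (hg : ∀ i j, |g i j| ≤ 1 / (2 * (N : ℝ) + 2)) : g ∈ Sset N := by
  rw [mem_Sset_iff]
  intro x hx
  set δ : ℝ := 1 / (2 * (N : ℝ) + 2) with hδ
  have hδpos : 0 < δ := by positivity
  have hxpos : 0 < ∑ j, x j ^ 2 := by
    obtain ⟨j, hj⟩ := Function.ne_iff.1 hx
    exact Finset.sum_pos' (fun j _ => sq_nonneg _)
      ⟨j, Finset.mem_univ j, sq_pos_of_ne_zero hj⟩
  have key : ∀ i, (∑ j, g i j * x j) ^ 2 ≤ ((N : ℝ) * δ ^ 2) * ∑ j, x j ^ 2 := by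
    intro i
    calc (∑ j, g i j * x j) ^ 2 ≤ (∑ j, g i j ^ 2) * ∑ j, x j ^ 2 :=
          Finset.sum_mul_sq_le_sq_mul_sq _ _ _
      _ ≤ ((N : ℝ) * δ ^ 2) * ∑ j, x j ^ 2 := by
          apply mul_le_mul_of_nonneg_right _ hxpos.le
          calc (∑ j, g i j ^ 2) ≤ ∑ _j : Fin N, δ ^ 2 := by
                apply Finset.sum_le_sum; intro j _
                exact sq_le_sq' (by linarith [abs_le.1 (hg i j)]) (abs_le.1 (hg i j)).2
            _ = (N : ℝ) * δ ^ 2 := by simp [mul_comm]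
  calc ∑ i, (∑ j, g i j * x j) ^ 2 ≤ ∑ _i : Fin N, ((N : ℝ) * δ ^ 2) * ∑ j, x j ^ 2 :=
        Finset.sum_le_sum fun i _ => key i
    _ = (N : ℝ) * (((N : ℝ) * δ ^ 2) * ∑ j, x j ^ 2) := by simp [mul_comm]
    _ < ∑ j, x j ^ 2 := by
        have h1 : (N : ℝ) * ((N : ℝ) * δ ^ 2) < 1 := by
          set c : ℝ := 2 * (N : ℝ) + 2 with hc
          have hcpos : 0 < c := by positivity
          have he : (N : ℝ) * ((N : ℝ) * δ ^ 2) = (N : ℝ) ^ 2 / c ^ 2 := by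
            rw [hδ, div_pow, one_pow]; ring
          rw [he, div_lt_one (by positivity), hc]
          nlinarith [Nat.cast_nonneg (α := ℝ) N]
        nlinarith

lemma mem_Kbox_of_mem_Sset (g : Fin N → Fin N → ℝ) (hS : g ∈ Sset N) : g ∈ Kbox N := by
  rw [mem_Sset_iff] at hS
  intro i j
  have hx : (Pi.single j 1 : Fin N → ℝ) ≠ 0 := by
    intro hc
    have := congrFun hc j
    simp at this
  have hkey := hS (Pi.single j 1) hx
  have h1 : (∑ j', (Pi.single j 1 : Fin N → ℝ) j' ^ 2) = 1 := by
    simp [Pi.single_apply, sq]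
  have h2 : ∀ i', (∑ j', g i' j' * (Pi.single j 1 : Fin N → ℝ) j') = g i' j := by
    intro i'; simp [Pi.single_apply]
  rw [h1] at hkey
  simp_rw [h2] at hkey
  have h3 : g i j ^ 2 ≤ ∑ i', g i' j ^ 2 :=
    Finset.single_le_sum (f := fun i' => g i' j ^ 2) (fun i' _ => sq_nonneg _)
      (Finset.mem_univ i)
  have h4 : g i j ^ 2 ≤ 1 := by linarith
  exact abs_le.2 ⟨by nlinarith, by nlinarith⟩

lemma cont_GtG : Continuous fun g : Fin N → Fin N → ℝ => (1 - (Matrix.of g)ᵀ * Matrix.of g) := by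
  apply continuous_matrix
  intro a b
  simp only [Matrix.sub_apply, Matrix.mul_apply, Matrix.one_apply, Matrix.transpose_apply,
    Matrix.of_apply]
  apply Continuous.sub continuous_const
  apply continuous_finset_sum
  intro i _
  fun_prop

lemma cont_GtG' : Continuous fun g : Fin N → Fin N → ℝ => ((Matrix.of g)ᵀ * Matrix.of g) := by
  apply continuous_matrix
  intro a b
  simp only [Matrix.mul_apply, Matrix.transpose_apply, Matrix.of_apply]
  apply continuous_finset_sum
  intro i _
  fun_prop

lemma cont_quad (x : Fin N → ℝ) :
    Continuous fun g : Fin N → Fin N → ℝ => ∑ i, (∑ j, g i j * x j) ^ 2 := by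
  apply continuous_finset_sum
  intro i _
  apply Continuous.pow
  apply continuous_finset_sum
  intro j _
  fun_prop

lemma Sset_eq :
    Sset N = {g : Fin N → Fin N → ℝ | ∀ x : Fin N → ℝ,
        ∑ i, (∑ j, g i j * x j) ^ 2 ≤ ∑ j, x j ^ 2} ∩
      {g | (1 - (Matrix.of g)ᵀ * Matrix.of g).det ≠ 0} := by
  ext g
  constructor
  · intro hg
    refine ⟨fun x => ?_, hg.det_pos.ne'⟩
    rcases eq_or_ne x 0 with rfl | hx
    · simp
    · have := hg.dotProduct_mulVec_pos hx
      rw [quad'] at this; linarith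
  · rintro ⟨hT, hD⟩
    have hsd : (1 - (Matrix.of g)ᵀ * Matrix.of g).PosSemidef :=
      .of_dotProduct_mulVec_nonneg (herm g) fun x => by rw [quad']; have := hT x; linarith
    refine .of_dotProduct_mulVec_pos (herm g) fun x hx => ?_
    rcases lt_or_eq_of_le (hsd.dotProduct_mulVec_nonneg x) with h | h
    · exact h
    · exfalso
      have h0 : (1 - (Matrix.of g)ᵀ * Matrix.of g) *ᵥ x = 0 :=
        (hsd.dotProduct_mulVec_zero_iff x).1 h.symm
      exact hx (Matrix.eq_zero_of_mulVec_eq_zero hD h0)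

lemma measurableSet_Sset : MeasurableSet (Sset N) := by
  rw [Sset_eq]
  apply MeasurableSet.inter
  · have : IsClosed {g : Fin N → Fin N → ℝ | ∀ x : Fin N → ℝ,
        ∑ i, (∑ j, g i j * x j) ^ 2 ≤ ∑ j, x j ^ 2} := by
      have he : {g : Fin N → Fin N → ℝ | ∀ x : Fin N → ℝ,
          ∑ i, (∑ j, g i j * x j) ^ 2 ≤ ∑ j, x j ^ 2}
          = ⋂ x : Fin N → ℝ, {g | ∑ i, (∑ j, g i j * x j) ^ 2 ≤ ∑ j, x j ^ 2} := by
        ext g; simp [Set.mem_iInter]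
      rw [he]
      exact isClosed_iInter fun x => isClosed_le (cont_quad x) continuous_const
    exact this.measurableSet
  · have hc : Continuous fun g : Fin N → Fin N → ℝ =>
        (1 - (Matrix.of g)ᵀ * Matrix.of g).det := cont_GtG.matrix_det
    exact (isOpen_compl_singleton.preimage hc).measurableSet

lemma wt_eq (g : Fin N → Fin N → ℝ) :
    antiSphericalRealWeight N β₁ β₂ g =
      if g ∈ Sset N then ((Matrix.of g)ᵀ * Matrix.of g).det ^ β₁ *
        (1 - (Matrix.of g)ᵀ * Matrix.of g).det ^ β₂ else 0 := by
  rw [antiSphericalRealWeight, Set.indicator_apply]; rfl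

lemma det_GtG_nonneg (g : Fin N → Fin N → ℝ) : 0 ≤ ((Matrix.of g)ᵀ * Matrix.of g).det := by
  rw [Matrix.det_mul, Matrix.det_transpose]
  exact mul_self_nonneg _

lemma wt_nonneg (g : Fin N → Fin N → ℝ) : 0 ≤ antiSphericalRealWeight N β₁ β₂ g := by
  rw [wt_eq]
  split_ifs with h
  · exact mul_nonneg (Real.rpow_nonneg (det_GtG_nonneg g) _)
      (Real.rpow_nonneg h.det_pos.le _)
  · exact le_refl 0

lemma wt_measurable (hβ₁ : 0 ≤ β₁) (hβ₂ : 0 ≤ β₂) :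
    Measurable (antiSphericalRealWeight N β₁ β₂) := by
  have h1 : Continuous fun g : Fin N → Fin N → ℝ =>
      ((Matrix.of g)ᵀ * Matrix.of g).det ^ β₁ *
        (1 - (Matrix.of g)ᵀ * Matrix.of g).det ^ β₂ :=
    ((Real.continuous_rpow_const hβ₁).comp cont_GtG'.matrix_det).mul
      ((Real.continuous_rpow_const hβ₂).comp cont_GtG.matrix_det)
  exact h1.measurable.indicator measurableSet_Sset

/-- bound constant for the weight -/
noncomputable def Cw (N : ℕ) (β₁ β₂ : ℝ) : ℝ :=
  ((N.factorial : ℝ) * (N : ℝ) ^ N) ^ β₁ * ((N.factorial : ℝ) * ((N : ℝ) + 1) ^ N) ^ β₂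

lemma Cw_nonneg : 0 ≤ Cw N β₁ β₂ := by
  apply mul_nonneg <;> apply Real.rpow_nonneg <;> positivity

lemma wt_le_Cw (hβ₁ : 0 ≤ β₁) (hβ₂ : 0 ≤ β₂) (g : Fin N → Fin N → ℝ) :
    antiSphericalRealWeight N β₁ β₂ g ≤ Cw N β₁ β₂ := by
  rw [wt_eq]
  split_ifs with h
  · have hK := mem_Kbox_of_mem_Sset g h
    have hent : ∀ a b, |(((Matrix.of g)ᵀ * Matrix.of g)) a b| ≤ (N : ℝ) := by
      intro a b
      rw [Matrix.mul_apply]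
      calc |∑ i, (Matrix.of g)ᵀ a i * Matrix.of g i b|
          ≤ ∑ i, |(Matrix.of g)ᵀ a i * Matrix.of g i b| := Finset.abs_sum_le_sum_abs _ _
        _ ≤ ∑ _i : Fin N, (1 : ℝ) := by
            apply Finset.sum_le_sum; intro i _
            rw [abs_mul]
            exact mul_le_one₀ (hK i a) (abs_nonneg _) (hK i b)
        _ = (N : ℝ) := by simp
    have hd1 : ((Matrix.of g)ᵀ * Matrix.of g).det ≤ (N.factorial : ℝ) * (N : ℝ) ^ N := by
      have := Matrix.det_le (abv := AbsoluteValue.abs) (A := (Matrix.of g)ᵀ * Matrix.of g)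
        (x := (N : ℝ)) hent
      simp only [nsmul_eq_mul, Fintype.card_fin] at this
      calc ((Matrix.of g)ᵀ * Matrix.of g).det ≤ |((Matrix.of g)ᵀ * Matrix.of g).det| :=
            le_abs_self _
        _ ≤ _ := this
    have hent2 : ∀ a b, |((1 : Matrix (Fin N) (Fin N) ℝ) - (Matrix.of g)ᵀ * Matrix.of g) a b|
        ≤ (N : ℝ) + 1 := by
      intro a b
      rw [Matrix.sub_apply]
      calc |(1 : Matrix (Fin N) (Fin N) ℝ) a b - ((Matrix.of g)ᵀ * Matrix.of g) a b|
          ≤ |(1 : Matrix (Fin N) (Fin N) ℝ) a b| + |((Matrix.of g)ᵀ * Matrix.of g) a b| :=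
            abs_sub _ _
        _ ≤ 1 + (N : ℝ) := by
            apply add_le_add _ (hent a b)
            rw [Matrix.one_apply]
            split_ifs <;> simp
        _ = (N : ℝ) + 1 := by ring
    have hd2 : (1 - (Matrix.of g)ᵀ * Matrix.of g).det
        ≤ (N.factorial : ℝ) * ((N : ℝ) + 1) ^ N := by
      have := Matrix.det_le (abv := AbsoluteValue.abs) (A := 1 - (Matrix.of g)ᵀ * Matrix.of g)
        (x := (N : ℝ) + 1) hent2
      simp only [nsmul_eq_mul, Fintype.card_fin] at this
      calc (1 - (Matrix.of g)ᵀ * Matrix.of g).det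
          ≤ |(1 - (Matrix.of g)ᵀ * Matrix.of g).det| := le_abs_self _
        _ ≤ _ := this
    apply mul_le_mul
    · exact Real.rpow_le_rpow (det_GtG_nonneg g) hd1 hβ₁
    · exact Real.rpow_le_rpow h.det_pos.le hd2 hβ₂
    · exact Real.rpow_nonneg h.det_pos.le _
    · exact Real.rpow_nonneg (by positivity) _
  · exact Cw_nonneg

lemma wt_eq_zero_of_not_mem_Kbox (g : Fin N → Fin N → ℝ) (h : g ∉ Kbox N) :
    antiSphericalRealWeight N β₁ β₂ g = 0 := by
  rw [wt_eq, if_neg (fun hS => h (mem_Kbox_of_mem_Sset g hS))]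

lemma measurableSet_Kbox : MeasurableSet (Kbox N) := by
  have : Kbox N = Set.pi Set.univ fun _i : Fin N =>
      Set.pi Set.univ fun _j : Fin N => Set.Icc (-1 : ℝ) 1 := by
    ext g
    simp only [Kbox, Set.mem_setOf_eq, Set.mem_pi, Set.mem_univ, true_implies, Set.mem_Icc]
    constructor
    · intro h i j; exact abs_le.1 (h i j)
    · intro h i j; exact abs_le.2 (h i j)
  rw [this]
  exact MeasurableSet.univ_pi fun i => MeasurableSet.univ_pi fun j => measurableSet_Icc

lemma volume_Kbox_lt_top : volume (Kbox N) < ⊤ := by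
  have hKe : Kbox N = Set.pi Set.univ fun _i : Fin N =>
      Set.pi Set.univ fun _j : Fin N => Set.Icc (-1 : ℝ) 1 := by
    ext g
    simp only [Kbox, Set.mem_setOf_eq, Set.mem_pi, Set.mem_univ, true_implies, Set.mem_Icc]
    constructor
    · intro h i j; exact abs_le.1 (h i j)
    · intro h i j; exact abs_le.2 (h i j)
  rw [hKe, volume_pi_pi]
  have h1 : volume (Set.pi Set.univ fun _j : Fin N => Set.Icc (-1 : ℝ) 1)
      = (ENNReal.ofReal 2) ^ N := by
    rw [volume_pi_pi]
    simp [Real.volume_Icc]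
    norm_num
  rw [h1, Finset.prod_const]
  simp only [Finset.card_univ, Fintype.card_fin]
  exact ENNReal.pow_lt_top (ENNReal.pow_lt_top ENNReal.ofReal_lt_top)

/-! ### The sign-flip maps -/

def flip (k : Fin N) (g : Fin N → Fin N → ℝ) : Fin N → Fin N → ℝ :=
  fun i => if i = k then -(g i) else g i

lemma flip_involutive (k : Fin N) : Function.Involutive (flip k) := by
  intro g; funext i; by_cases h : i = k <;> simp [flip, h]

lemma measurePreserving_flip (k : Fin N) :
    MeasurePreserving (flip k) (volume : Measure (Fin N → Fin N → ℝ)) volume := by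
  have hneg : MeasurePreserving (fun v : Fin N → ℝ => -v) volume volume := by
    have he : (fun v : Fin N → ℝ => -v) = fun v i => -(v i) := rfl
    rw [he]
    exact volume_preserving_pi fun _ => Measure.measurePreserving_neg _
  have he : flip k = fun (g : Fin N → Fin N → ℝ) i =>
      (if i = k then (fun v : Fin N → ℝ => -v) else id) (g i) := by
    funext g i; by_cases h : i = k <;> simp [flip, h]
  rw [he]
  apply volume_preserving_pi
  intro i
  by_cases h : i = k
  · simpa [h] using hneg
  · simpa [h] using MeasurePreserving.id _

def flipEquiv (k : Fin N) : (Fin N → Fin N → ℝ) ≃ᵐ (Fin N → Fin N → ℝ) where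
  toFun := flip k
  invFun := flip k
  left_inv := flip_involutive k
  right_inv := flip_involutive k
  measurable_toFun := (measurePreserving_flip k).measurable
  measurable_invFun := (measurePreserving_flip k).measurable

lemma GtG_flip (k : Fin N) (g : Fin N → Fin N → ℝ) :
    (Matrix.of (flip k g))ᵀ * Matrix.of (flip k g) = (Matrix.of g)ᵀ * Matrix.of g := by
  ext a b
  simp only [Matrix.mul_apply, Matrix.transpose_apply, Matrix.of_apply]
  refine Finset.sum_congr rfl fun i _ => ?_
  by_cases h : i = k <;> simp [flip, h]

lemma wt_flip (k : Fin N) (g : Fin N → Fin N → ℝ) :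
    antiSphericalRealWeight N β₁ β₂ (flip k g) = antiSphericalRealWeight N β₁ β₂ g := by
  simp only [antiSphericalRealWeight, Set.indicator_apply, Set.mem_setOf_eq, GtG_flip]

lemma flip_mem_Kbox (k : Fin N) {g : Fin N → Fin N → ℝ} (hg : g ∈ Kbox N) :
    flip k g ∈ Kbox N := by
  intro i j
  by_cases h : i = k <;> simp only [flip, h, if_true, if_false, ite_true, ite_false,
    Pi.neg_apply, abs_neg]
  · exact hg _ j
  · exact hg _ j

/-! ### The interpolating matrices -/

noncomputable def matZ (N : ℕ) (z : ℂ) (k : ℕ) (g : Fin N → Fin N → ℝ) :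
    Matrix (Fin N) (Fin N) ℂ :=
  Matrix.of fun i j => (if i = j then z else 0) - if (i : ℕ) < k then 0 else (g i j : ℂ)

lemma matZ_zero (z : ℂ) (g : Fin N → Fin N → ℝ) :
    matZ N z 0 g = z • (1 : Matrix (Fin N) (Fin N) ℂ) - (Matrix.of g).map ((↑) : ℝ → ℂ) := by
  ext i j
  simp [matZ, Matrix.one_apply, Matrix.smul_apply, Matrix.map_apply, smul_eq_mul, mul_ite]

lemma det_matZ_top (z : ℂ) (g : Fin N → Fin N → ℝ) :
    (matZ N z N g).det = z ^ N := by
  have he : matZ N z N g = z • (1 : Matrix (Fin N) (Fin N) ℂ) := by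
    ext i j
    simp [matZ, i.isLt, Matrix.one_apply, Matrix.smul_apply, smul_eq_mul, mul_ite]
  rw [he, Matrix.det_smul, Matrix.det_one, Fintype.card_fin, mul_one]

lemma det_step (z : ℂ) (k : ℕ) (hk : k < N) (g : Fin N → Fin N → ℝ) :
    (matZ N z k g).det + (matZ N z k (flip ⟨k, hk⟩ g)).det
      = 2 * (matZ N z (k + 1) g).det := by
  set i₀ : Fin N := ⟨k, hk⟩ with hi₀
  set M := matZ N z (k + 1) g with hM
  have hrow : ∀ (h : Fin N → Fin N → ℝ), (∀ i : Fin N, (i : ℕ) ≠ k → h i = g i) →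
      matZ N z k h = Matrix.updateRow M i₀
        (fun j => (if i₀ = j then z else 0) - (h i₀ j : ℂ)) := by
    intro h hh
    ext i j
    rcases eq_or_ne i i₀ with rfl | hne
    · rw [Matrix.updateRow_self]
      simp only [matZ, Matrix.of_apply]
      have : ¬ ((i₀ : ℕ) < k) := by simp [hi₀]
      rw [if_neg this]
    · rw [Matrix.updateRow_ne hne]
      have hik : (i : ℕ) ≠ k := fun hik => hne (Fin.ext hik)
      simp only [matZ, hM, Matrix.of_apply, hh i hik]
      congr 1
      by_cases hlt : (i : ℕ) < k
      · rw [if_pos hlt, if_pos (hlt.trans (Nat.lt_succ_self k))]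
      · rw [if_neg hlt, if_neg (by omega)]
  have h1 : matZ N z k g = Matrix.updateRow M i₀
      (fun j => (if i₀ = j then z else 0) - (g i₀ j : ℂ)) := hrow g (fun _ _ => rfl)
  have h2 : matZ N z k (flip i₀ g) = Matrix.updateRow M i₀
      (fun j => (if i₀ = j then z else 0) + (g i₀ j : ℂ)) := by
    rw [hrow (flip i₀ g) (fun i hik => by
      simp [flip, show i ≠ i₀ from fun h => hik (by simp [h, hi₀])])]
    funext j
    simp [flip, sub_neg_eq_add]
  have h3 : Matrix.updateRow M i₀ (fun j => if i₀ = j then z else 0) = M := by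
    have hMr : (fun j => if i₀ = j then z else 0) = M i₀ := by
      funext j
      simp only [hM, matZ, Matrix.of_apply]
      have : (i₀ : ℕ) < k + 1 := by simp [hi₀]
      rw [if_pos this, sub_zero]
    rw [hMr, Matrix.updateRow_eq_self]
  rw [h1, h2, ← Matrix.det_updateRow_add]
  have h4 : ((fun j => (if i₀ = j then z else 0) - (g i₀ j : ℂ)) +
      (fun j => (if i₀ = j then z else 0) + (g i₀ j : ℂ)))
      = (2 : ℂ) • fun j => (if i₀ = j then z else 0) := by
    funext j
    simp only [Pi.add_apply, Pi.smul_apply, smul_eq_mul]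
    ring
  rw [h4, Matrix.det_updateRow_smul, h3]

lemma cont_det_matZ (z : ℂ) (k : ℕ) :
    Continuous fun g : Fin N → Fin N → ℝ => (matZ N z k g).det := by
  apply Continuous.matrix_det
  apply continuous_matrix
  intro i j
  simp only [matZ, Matrix.of_apply]
  apply Continuous.sub continuous_const
  by_cases h : (i : ℕ) < k
  · simp only [if_pos h]; exact continuous_const
  · simp only [if_neg h]
    exact Complex.continuous_ofReal.comp ((continuous_apply j).comp (continuous_apply i))

lemma norm_det_matZ_le (z : ℂ) (k : ℕ) (g : Fin N → Fin N → ℝ) (hg : ∀ i j, |g i j| ≤ 1) :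
    ‖(matZ N z k g).det‖ ≤ (N.factorial : ℝ) * (‖z‖ + 1) ^ N := by
  have hent : ∀ i j, ‖matZ N z k g i j‖ ≤ ‖z‖ + 1 := by
    intro i j
    simp only [matZ, Matrix.of_apply]
    calc ‖(if i = j then z else 0) - if (i : ℕ) < k then 0 else (g i j : ℂ)‖
        ≤ ‖(if i = j then z else 0 : ℂ)‖ +
          ‖(if (i : ℕ) < k then 0 else (g i j : ℂ))‖ :=
          norm_sub_le _ _
      _ ≤ ‖z‖ + 1 := by
          apply add_le_add
          · split_ifs <;> simp
          · split_ifs with h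
            · simp
            · simpa [Complex.norm_real] using hg i j
  have := Matrix.det_le (abv := NormedField.toAbsoluteValue ℂ) (A := matZ N z k g) (x := ‖z‖ + 1) hent
  simp only [nsmul_eq_mul, Fintype.card_fin] at this
  exact this

/-! ### Integrability -/

lemma integrable_wt_mul (hβ₁ : 0 ≤ β₁) (hβ₂ : 0 ≤ β₂) {q : (Fin N → Fin N → ℝ) → ℂ}
    (hq : Measurable q) {C : ℝ} (hCq : ∀ g ∈ Kbox N, ‖q g‖ ≤ C) :
    Integrable (fun g => (antiSphericalRealWeight N β₁ β₂ g : ℂ) * q g) := by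
  have hmeas : AEStronglyMeasurable
      (fun g => (antiSphericalRealWeight N β₁ β₂ g : ℂ) * q g) volume :=
    ((Complex.measurable_ofReal.comp (wt_measurable hβ₁ hβ₂)).mul hq).aestronglyMeasurable
  have hint : Integrable ((Kbox N).indicator fun _ => Cw N β₁ β₂ * C) volume := by
    rw [integrable_indicator_iff measurableSet_Kbox]
    exact integrableOn_const volume_Kbox_lt_top.ne
  apply Integrable.mono' hint hmeas
  filter_upwards with g
  by_cases hg : g ∈ Kbox N
  · rw [Set.indicator_of_mem hg, norm_mul, Complex.norm_real,
      Real.norm_of_nonneg (wt_nonneg g)]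
    exact mul_le_mul (wt_le_Cw hβ₁ hβ₂ g) (hCq g hg) (norm_nonneg _) Cw_nonneg
  · rw [Set.indicator_of_notMem hg, wt_eq_zero_of_not_mem_Kbox g hg]
    simp

lemma integrable_wt (hβ₁ : 0 ≤ β₁) (hβ₂ : 0 ≤ β₂) :
    Integrable (antiSphericalRealWeight N β₁ β₂) (volume : Measure (Fin N → Fin N → ℝ)) := by
  have hint : Integrable ((Kbox N).indicator fun _ => Cw N β₁ β₂) volume := by
    rw [integrable_indicator_iff measurableSet_Kbox]
    exact integrableOn_const volume_Kbox_lt_top.ne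
  apply Integrable.mono' hint (wt_measurable hβ₁ hβ₂).aestronglyMeasurable
  filter_upwards with g
  by_cases hg : g ∈ Kbox N
  · rw [Set.indicator_of_mem hg, Real.norm_of_nonneg (wt_nonneg g)]
    exact wt_le_Cw hβ₁ hβ₂ g
  · rw [Set.indicator_of_notMem hg, wt_eq_zero_of_not_mem_Kbox g hg]
    simp

/-! ### Positivity of the normalization -/

lemma integral_wt_pos (hβ₁ : 0 ≤ β₁) (hβ₂ : 0 ≤ β₂) :
    0 < ∫ g, antiSphericalRealWeight N β₁ β₂ g := by
  rw [integral_pos_iff_support_of_nonneg wt_nonneg (integrable_wt hβ₁ hβ₂)]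
  set δ : ℝ := 1 / (2 * (N : ℝ) + 2) with hδ
  have hδpos : 0 < δ := by positivity
  set U : Set (Fin N → Fin N → ℝ) :=
    {g | ∀ i j, |g i j| < δ} ∩ {g | (Matrix.of g).det ≠ 0} with hU
  have hUopen : IsOpen U := by
    apply IsOpen.inter
    · have he : {g : Fin N → Fin N → ℝ | ∀ i j, |g i j| < δ}
          = ⋂ i, ⋂ j, {g : Fin N → Fin N → ℝ | |g i j| < δ} := by
        ext g; simp
      rw [he]
      refine isOpen_iInter_of_finite fun i => isOpen_iInter_of_finite fun j => ?_
      exact isOpen_lt (((continuous_apply j).comp (continuous_apply i)).abs) continuous_const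
    · have hc : Continuous fun g : Fin N → Fin N → ℝ => (Matrix.of g).det := by
        apply Continuous.matrix_det
        apply continuous_matrix
        intro a b
        exact (continuous_apply b).comp (continuous_apply a)
      exact isOpen_compl_singleton.preimage hc
  have hUne : U.Nonempty := by
    refine ⟨fun i j => if i = j then δ / 2 else 0, ?_, ?_⟩
    · intro i j
      by_cases h : i = j <;> simp only [h, if_pos, if_neg, ite_true, ite_false]
      · rw [abs_of_nonneg (by positivity)]; linarith
      · simp [hδpos]
    · have he : Matrix.of (fun i j : Fin N => if i = j then δ / 2 else 0)
          = Matrix.diagonal (fun _ => δ / 2) := by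
        ext i j
        simp [Matrix.diagonal_apply]
      simp only [Set.mem_setOf_eq, he, Matrix.det_diagonal, Finset.prod_const]
      positivity
  have hUsub : U ⊆ Function.support (antiSphericalRealWeight N β₁ β₂) := by
    rintro g ⟨hbox, hdet⟩
    have hS : g ∈ Sset N := mem_Sset_of_box g fun i j => (hbox i j).le
    rw [Function.mem_support, wt_eq, if_pos hS]
    have h1 : 0 < ((Matrix.of g)ᵀ * Matrix.of g).det := by
      rw [Matrix.det_mul, Matrix.det_transpose]
      exact mul_self_pos.2 hdet
    have h2 : 0 < (1 - (Matrix.of g)ᵀ * Matrix.of g).det := hS.det_pos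
    positivity
  exact lt_of_lt_of_le (hUopen.measure_pos volume hUne) (measure_mono hUsub)

/-! ### The main induction -/

lemma int_step (hβ₁ : 0 ≤ β₁) (hβ₂ : 0 ≤ β₂) (z : ℂ) (k : ℕ) (hk : k < N) :
    ∫ g, (antiSphericalRealWeight N β₁ β₂ g : ℂ) * (matZ N z k g).det
      = ∫ g, (antiSphericalRealWeight N β₁ β₂ g : ℂ) * (matZ N z (k + 1) g).det := by
  set i₀ : Fin N := ⟨k, hk⟩ with hi₀
  have hq1 : Integrable (fun g => (antiSphericalRealWeight N β₁ β₂ g : ℂ) * (matZ N z k g).det) :=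
    integrable_wt_mul hβ₁ hβ₂ (cont_det_matZ z k).measurable
      (fun g hg => norm_det_matZ_le z k g hg)
  have hq2 : Integrable
      (fun g => (antiSphericalRealWeight N β₁ β₂ g : ℂ) * (matZ N z k (flip i₀ g)).det) :=
    integrable_wt_mul hβ₁ hβ₂
      ((cont_det_matZ z k).measurable.comp (measurePreserving_flip i₀).measurable)
      (fun g hg => norm_det_matZ_le z k (flip i₀ g) (flip_mem_Kbox i₀ hg))
  have hcomp : ∫ g, (antiSphericalRealWeight N β₁ β₂ g : ℂ) * (matZ N z k g).det
      = ∫ g, (antiSphericalRealWeight N β₁ β₂ g : ℂ) * (matZ N z k (flip i₀ g)).det := by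
    have := (measurePreserving_flip (N := N) i₀).integral_comp'
      (f := flipEquiv i₀)
      (fun g => (antiSphericalRealWeight N β₁ β₂ g : ℂ) * (matZ N z k g).det)
    rw [← this]
    apply integral_congr_ae
    filter_upwards with g
    have : flipEquiv i₀ g = flip i₀ g := rfl
    rw [this, wt_flip]
  have h2 : (2 : ℂ) * ∫ g, (antiSphericalRealWeight N β₁ β₂ g : ℂ) * (matZ N z k g).det
      = (2 : ℂ) * ∫ g, (antiSphericalRealWeight N β₁ β₂ g : ℂ) * (matZ N z (k + 1) g).det := by
    calc (2 : ℂ) * ∫ g, (antiSphericalRealWeight N β₁ β₂ g : ℂ) * (matZ N z k g).det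
        = (∫ g, (antiSphericalRealWeight N β₁ β₂ g : ℂ) * (matZ N z k g).det)
          + ∫ g, (antiSphericalRealWeight N β₁ β₂ g : ℂ) * (matZ N z k (flip i₀ g)).det := by
          rw [← hcomp]; ring
      _ = ∫ g, ((antiSphericalRealWeight N β₁ β₂ g : ℂ) * (matZ N z k g).det
          + (antiSphericalRealWeight N β₁ β₂ g : ℂ) * (matZ N z k (flip i₀ g)).det) :=
          (integral_add hq1 hq2).symm
      _ = ∫ g, (2 : ℂ) * ((antiSphericalRealWeight N β₁ β₂ g : ℂ)
            * (matZ N z (k + 1) g).det) := by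
          apply integral_congr_ae
          filter_upwards with g
          rw [← mul_add, det_step z k hk g]
          ring
      _ = (2 : ℂ) * ∫ g, (antiSphericalRealWeight N β₁ β₂ g : ℂ)
            * (matZ N z (k + 1) g).det := integral_const_mul _ _
  exact mul_left_cancel₀ two_ne_zero h2

lemma int_all (hβ₁ : 0 ≤ β₁) (hβ₂ : 0 ≤ β₂) (z : ℂ) :
    ∀ k, k ≤ N →
      (∫ g, (antiSphericalRealWeight N β₁ β₂ g : ℂ) * (matZ N z 0 g).det)
        = ∫ g, (antiSphericalRealWeight N β₁ β₂ g : ℂ) * (matZ N z k g).det := by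
  intro k
  induction k with
  | zero => intro _; rfl
  | succ k ih =>
      intro h
      rw [ih (Nat.le_of_succ_le h), int_step hβ₁ hβ₂ z k h]

end ASAux

/-- The even-degree skew orthogonal polynomial for the real anti-spherical ensemble:
`⟨det (z I - G)⟩ = z^(2n)`. -/
theorem realAntiSpherical_even_skew_orthogonal_poly (n : ℕ) (hn : 0 < n)
    (β₁ β₂ : ℝ) (hβ₁ : 0 ≤ β₁) (hβ₂ : 0 ≤ β₂) (z : ℂ) :
    (∫ g : Fin (2 * n) → Fin (2 * n) → ℝ,
        (antiSphericalRealWeight (2 * n) β₁ β₂ g : ℂ) *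
          (z • (1 : Matrix (Fin (2 * n)) (Fin (2 * n)) ℂ)
            - (Matrix.of g).map ((↑) : ℝ → ℂ)).det) /
      ((∫ g : Fin (2 * n) → Fin (2 * n) → ℝ, antiSphericalRealWeight (2 * n) β₁ β₂ g : ℝ) : ℂ)
      = z ^ (2 * n) := by
  have hP : 0 < ∫ g : Fin (2 * n) → Fin (2 * n) → ℝ, antiSphericalRealWeight (2 * n) β₁ β₂ g :=
    ASAux.integral_wt_pos hβ₁ hβ₂
  have hP0 : ((∫ g : Fin (2 * n) → Fin (2 * n) → ℝ,
      antiSphericalRealWeight (2 * n) β₁ β₂ g : ℝ) : ℂ) ≠ 0 :=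
    Complex.ofReal_ne_zero.mpr hP.ne'
  have hnum : (∫ g : Fin (2 * n) → Fin (2 * n) → ℝ,
      (antiSphericalRealWeight (2 * n) β₁ β₂ g : ℂ) *
        (z • (1 : Matrix (Fin (2 * n)) (Fin (2 * n)) ℂ)
          - (Matrix.of g).map ((↑) : ℝ → ℂ)).det)
      = z ^ (2 * n) * ((∫ g : Fin (2 * n) → Fin (2 * n) → ℝ,
          antiSphericalRealWeight (2 * n) β₁ β₂ g : ℝ) : ℂ) := by
    calc (∫ g : Fin (2 * n) → Fin (2 * n) → ℝ,
        (antiSphericalRealWeight (2 * n) β₁ β₂ g : ℂ) *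
          (z • (1 : Matrix (Fin (2 * n)) (Fin (2 * n)) ℂ)
            - (Matrix.of g).map ((↑) : ℝ → ℂ)).det)
        = ∫ g : Fin (2 * n) → Fin (2 * n) → ℝ,
            (antiSphericalRealWeight (2 * n) β₁ β₂ g : ℂ)
              * (ASAux.matZ (2 * n) z 0 g).det := by
          apply integral_congr_ae
          filter_upwards with g
          rw [ASAux.matZ_zero]
      _ = ∫ g : Fin (2 * n) → Fin (2 * n) → ℝ,
            (antiSphericalRealWeight (2 * n) β₁ β₂ g : ℂ)
              * (ASAux.matZ (2 * n) z (2 * n) g).det :=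
          ASAux.int_all hβ₁ hβ₂ z (2 * n) le_rfl
      _ = ∫ g : Fin (2 * n) → Fin (2 * n) → ℝ,
            z ^ (2 * n) * (antiSphericalRealWeight (2 * n) β₁ β₂ g : ℂ) := by
          apply integral_congr_ae
          filter_upwards with g
          rw [ASAux.det_matZ_top]
          ring
      _ = z ^ (2 * n) * ∫ g : Fin (2 * n) → Fin (2 * n) → ℝ,
            ((antiSphericalRealWeight (2 * n) β₁ β₂ g : ℝ) : ℂ) := integral_const_mul _ _
      _ = z ^ (2 * n) * ((∫ g : Fin (2 * n) → Fin (2 * n) → ℝ,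
            antiSphericalRealWeight (2 * n) β₁ β₂ g : ℝ) : ℂ) := by
          congr 1
          exact integral_ofReal
  rw [hnum, mul_div_assoc, div_self hP0, mul_one]
end
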